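/- arXiv:1511.06863 — 4 statements merged into one kernel-verified Lean document; each statement's English description precedes it below -/
import Mathlib

section
/- Let G be a nilpotent group of class 3 and x,y ∈ G. Then for any nonnegative integer m, (xy)^m = x^m y^m [x,y]^{-C(m,2)} [x,y,x]^{-C(m,3)} [x,y,y]^{C(m,3)+(1-m)C(m,2)}. -/
theorem two_choose_two (m : ℕ) : 2 * (m.choose 2 : ℤ) = m * m - m := by
  induction m with
  | zero => simp
  | succ m ih =>
    rw [Nat.choose_succ_succ, Nat.choose_one_right]
    push_cast
    push_cast at ih
    linarith

theorem collect {G:Type*} [Group G] (x y c z1 z2 : G)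
    (hz1 : ∀ g : G, z1 * g = g * z1) (hz2 : ∀ g : G, z2 * g = g * z2)
    (hcx : x⁻¹ * c * x = c * z1) (hcy : y⁻¹ * c * y = c * z2)
    (hyx : y * x = x * y * c⁻¹) (m : ℕ) :
    (x*y)^m = x^m * y^m * c^(-(Nat.choose m 2:ℤ)) * z1^(-(Nat.choose m 3:ℤ)) *
      z2^((Nat.choose m 3:ℤ) + (1 - (m:ℤ)) * (Nat.choose m 2:ℤ)) := by
  have Cz1 : ∀ g : G, Commute z1 g := fun g => hz1 g
  have Cz2 : ∀ g : G, Commute z2 g := fun g => hz2 g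
  have k1 : ∀ n : ℤ, c^n * x = x * (c^n * z1^n) := by
    intro n
    have h1 : (x⁻¹ * c * x)^n = x⁻¹ * c^n * x := by
      have := conj_zpow (i := n) (a := x⁻¹) (b := c)
      simpa using this
    have h2 : (c * z1)^n = c^n * z1^n := ((Cz1 c).symm).mul_zpow n
    calc c^n * x = x * ((x⁻¹ * c * x)^n) := by rw [h1]; group
    _ = x * (c^n * z1^n) := by rw [hcx, h2]
  have k2 : ∀ n : ℤ, c^n * y = y * (c^n * z2^n) := by
    intro n
    have h1 : (y⁻¹ * c * y)^n = y⁻¹ * c^n * y := by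
      have := conj_zpow (i := n) (a := y⁻¹) (b := c)
      simpa using this
    have h2 : (c * z2)^n = c^n * z2^n := ((Cz2 c).symm).mul_zpow n
    calc c^n * y = y * ((y⁻¹ * c * y)^n) := by rw [h1]; group
    _ = y * (c^n * z2^n) := by rw [hcy, h2]
  have k1t : ∀ (n : ℤ) (t : G), c^n * (x * t) = x * (c^n * (z1^n * t)) := by
    intro n t; rw [← mul_assoc, k1]; simp [mul_assoc]
  have k2t : ∀ (n : ℤ) (t : G), c^n * (y * t) = y * (c^n * (z2^n * t)) := by
    intro n t; rw [← mul_assoc, k2]; simp [mul_assoc]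
  have z1x : ∀ (n : ℤ) (t : G), z1^n * (x * t) = x * (z1^n * t) := by
    intro n t; rw [← mul_assoc, ((Cz1 x).zpow_left n).eq]; simp [mul_assoc]
  have z2x : ∀ (n : ℤ) (t : G), z2^n * (x * t) = x * (z2^n * t) := by
    intro n t; rw [← mul_assoc, ((Cz2 x).zpow_left n).eq]; simp [mul_assoc]
  have z1y : ∀ (n : ℤ) (t : G), z1^n * (y * t) = y * (z1^n * t) := by
    intro n t; rw [← mul_assoc, ((Cz1 y).zpow_left n).eq]; simp [mul_assoc]
  have z2y : ∀ (n : ℤ) (t : G), z2^n * (y * t) = y * (z2^n * t) := by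
    intro n t; rw [← mul_assoc, ((Cz2 y).zpow_left n).eq]; simp [mul_assoc]
  have z1yb : ∀ (n : ℤ), z1^n * y = y * z1^n := fun n => ((Cz1 y).zpow_left n).eq
  have z2yb : ∀ (n : ℤ), z2^n * y = y * z2^n := fun n => ((Cz2 y).zpow_left n).eq
  have z1c : ∀ (n e : ℤ) (t : G), z1^n * (c^e * t) = c^e * (z1^n * t) := by
    intro n e t; rw [← mul_assoc, (((Cz1 c).zpow_zpow n e)).eq]; simp [mul_assoc]
  have z2c : ∀ (n e : ℤ) (t : G), z2^n * (c^e * t) = c^e * (z2^n * t) := by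
    intro n e t; rw [← mul_assoc, (((Cz2 c).zpow_zpow n e)).eq]; simp [mul_assoc]
  have z2z1 : ∀ (n e : ℤ) (t : G), z2^n * (z1^e * t) = z1^e * (z2^n * t) := by
    intro n e t; rw [← mul_assoc, (((Cz2 z1).zpow_zpow n e)).eq]; simp [mul_assoc]
  have cct : ∀ (a b : ℤ) (t : G), c^a * (c^b * t) = c^(a+b) * t := by
    intro a b t; rw [← mul_assoc, ← zpow_add]
  have px : ∀ t : G, x^m * (x * t) = x^(m+1) * t := by
    intro t; rw [← mul_assoc, ← pow_succ]
  have py : ∀ t : G, y^m * (y * t) = y^(m+1) * t := by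
    intro t; rw [← mul_assoc, ← pow_succ]
  have kyx : ∀ (k : ℕ) (t : G), y^k * (x * t) =
      x * (y^k * (c^(-(k:ℤ)) * (z2^(-(Nat.choose k 2:ℤ)) * t))) := by
    intro k
    induction k with
    | zero => intro t; simp
    | succ k ih =>
      intro t
      have hyxt : ∀ t : G, y * (x * t) = x * (y * (c^(-1:ℤ) * t)) := by
        intro t
        rw [← mul_assoc, hyx]
        simp [mul_assoc, zpow_neg]
      calc y^(k+1) * (x * t) = y^k * (y * (x * t)) := by
            simp [pow_succ, mul_assoc]
      _ = y^k * (x * (y * (c^(-1:ℤ) * t))) := by rw [hyxt]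
      _ = x * (y^k * (c^(-(k:ℤ)) * (z2^(-(Nat.choose k 2:ℤ)) * (y * (c^(-1:ℤ) * t))))) := by
            rw [ih]
      _ = x * (y^(k+1) * (c^(-((k:ℤ)+1)) * (z2^(-(Nat.choose (k+1) 2:ℤ)) * t))) := by
            rw [z2y, k2t]
            rw [show Nat.choose (k+1) 2 = k + Nat.choose k 2 by
              rw [Nat.choose_succ_succ, Nat.choose_one_right]]
            push_cast
            rw [z2c, z2c]
            group

  clear px py
  have pxg : ∀ (j : ℕ) (t : G), x^j * (x * t) = x^(j+1) * t := by
    intro j t; rw [← mul_assoc, ← pow_succ]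
  have pyg : ∀ (j : ℕ) (t : G), y^j * (y * t) = y^(j+1) * t := by
    intro j t; rw [← mul_assoc, ← pow_succ]
  induction m with
  | zero => simp
  | succ m ih =>
    rw [pow_succ, ih]
    rw [show Nat.choose (m+1) 2 = m + Nat.choose m 2 by
        rw [Nat.choose_succ_succ, Nat.choose_one_right],
      show Nat.choose (m+1) 3 = Nat.choose m 2 + Nat.choose m 3 from Nat.choose_succ_succ m 2]
    simp only [mul_assoc]
    rw [show ((↑(m.choose 2 + m.choose 3):ℤ) + (1 - ↑(m + 1)) * ↑(m + m.choose 2)) =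
        ((m.choose 3:ℤ) + (1 - (m:ℤ)) * (m.choose 2:ℤ)) + (-(m:ℤ) + -(m.choose 2:ℤ)) +
          (-(m.choose 2:ℤ)) from by push_cast; linear_combination two_choose_two m]
    have z2z1b : ∀ (n e : ℤ), z2^n * z1^e = z1^e * z2^n := fun n e => ((Cz2 z1).zpow_zpow n e).eq
    rw [z2x, z1x, k1t, kyx, pxg, z2yb, z1y, z2c, cct, z1y, z2y, k2t, pyg]
    simp only [z2z1, z2z1b]
    group


open scoped commutatorElement

theorem lcs_comm_mem_succ {G:Type*} [Group G] {n:ℕ} {p : G}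
    (hp : p ∈ Subgroup.lowerCentralSeries (⊤ : Subgroup G) n) (q : G) :
    ⁅p, q⁆ ∈ Subgroup.lowerCentralSeries (⊤ : Subgroup G) (n+1) := by
  rw [Subgroup.lowerCentralSeries_succ]
  exact Subgroup.subset_closure ⟨p, hp, q, Subgroup.mem_top q, rfl⟩

/-- The commutator `[a,b] = a⁻¹b⁻¹ab` used in the paper. -/
def pcomm {G : Type*} [Group G] (a b : G) : G := a⁻¹ * b⁻¹ * a * b

/-- In a nilpotent group of class 3,
`(xy)^m = xᵐ yᵐ [x,y]^{-C(m,2)} [x,y,x]^{-C(m,3)} [x,y,y]^{C(m,3)+(1-m)C(m,2)}`. -/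
theorem stmt_5 {G : Type*} [Group G] (h4 : Subgroup.lowerCentralSeries (⊤ : Subgroup G) 3 = ⊥)
    (x y : G) (m : ℕ) :
    (x * y) ^ m =
      x ^ m * y ^ m * (pcomm x y) ^ (-(Nat.choose m 2 : ℤ)) *
        (pcomm (pcomm x y) x) ^ (-(Nat.choose m 3 : ℤ)) *
        (pcomm (pcomm x y) y) ^
          ((Nat.choose m 3 : ℤ) + (1 - (m : ℤ)) * (Nat.choose m 2 : ℤ)) := by
  have hc : pcomm x y ∈ Subgroup.lowerCentralSeries (⊤ : Subgroup G) 1 := by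
    have h : pcomm x y = ⁅x⁻¹, y⁻¹⁆ := by
      simp [pcomm, commutatorElement_def]
    rw [h]
    exact lcs_comm_mem_succ (by rw [Subgroup.lowerCentralSeries_zero]; exact Subgroup.mem_top _) _
  have central : ∀ z ∈ Subgroup.lowerCentralSeries (⊤ : Subgroup G) 2, ∀ g : G, z * g = g * z := by
    intro z hz g
    have h := lcs_comm_mem_succ hz g
    rw [h4, Subgroup.mem_bot] at h
    exact commutatorElement_eq_one_iff_mul_comm.mp h
  have hz1m : pcomm (pcomm x y) x ∈ Subgroup.lowerCentralSeries (⊤ : Subgroup G) 2 := by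
    have h : pcomm (pcomm x y) x = ⁅(pcomm x y)⁻¹, x⁻¹⁆ := by
      simp [pcomm, commutatorElement_def]
    rw [h]
    exact lcs_comm_mem_succ ((Subgroup.lowerCentralSeries (⊤ : Subgroup G) 1).inv_mem hc) _
  have hz2m : pcomm (pcomm x y) y ∈ Subgroup.lowerCentralSeries (⊤ : Subgroup G) 2 := by
    have h : pcomm (pcomm x y) y = ⁅(pcomm x y)⁻¹, y⁻¹⁆ := by
      simp [pcomm, commutatorElement_def]
    rw [h]
    exact lcs_comm_mem_succ ((Subgroup.lowerCentralSeries (⊤ : Subgroup G) 1).inv_mem hc) _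
  exact collect x y (pcomm x y) (pcomm (pcomm x y) x) (pcomm (pcomm x y) y)
    (central _ hz1m) (central _ hz2m)
    (by simp only [pcomm]; group) (by simp only [pcomm]; group)
    (by simp only [pcomm]; group) m
end

section
/- Let G be a nilpotent group of class 3 and x,y ∈ G. Then for any nonnegative integer m, (xy^{-1})^m = x^m y^{-m} [x,y]^{C(m,2)} [x,y,x]^{C(m,3)} [x,y,y]^{C(m,3) - m·C(m,2)}. -/
private lemma two_choose (m : ℕ) : 2 * Nat.choose m 2 + m = m * m := by
  induction m with
  | zero => rfl
  | succ n ih =>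
    rw [Nat.choose_succ_succ, Nat.choose_one_right]
    have h : (n + 1) * (n + 1) = n * n + 2 * n + 1 := by ring
    have e2 : Nat.choose n (Nat.succ 1) = Nat.choose n 2 := rfl
    omega

private lemma choose_succ_two (m : ℕ) :
    Nat.choose (m + 1) 2 = m + Nat.choose m 2 := by
  rw [Nat.choose_succ_succ, Nat.choose_one_right]

private lemma choose_succ_three (m : ℕ) :
    Nat.choose (m + 1) 3 = Nat.choose m 2 + Nat.choose m 3 := by
  rw [Nat.choose_succ_succ]

section Key

variable {G : Type*} [Group G]

private lemma key (x y c d e : G)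
    (hd : ∀ g : G, Commute d g) (he : ∀ g : G, Commute e g)
    (hcx : c * x = x * (c * d)) (hcy : c * y = y * (c * e))
    (hc : y⁻¹ * x * y = x * c) (m : ℕ) :
    (x * y⁻¹) ^ m =
      x ^ m * (y ^ m)⁻¹ * c ^ (Nat.choose m 2) * d ^ (Nat.choose m 3) *
        e ^ ((Nat.choose m 3 : ℤ) - (m : ℤ) * (Nat.choose m 2 : ℤ)) := by
  -- conjugation facts
  have hx1 : x⁻¹ * c * x = c * d := by rw [mul_assoc, hcx]; group
  have hy1 : y⁻¹ * c * y = c * e := by rw [mul_assoc, hcy]; group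
  have corex : ∀ n : ℕ, x⁻¹ * c ^ n * x = c ^ n * d ^ n := by
    intro n
    calc x⁻¹ * c ^ n * x = (x⁻¹ * c * x⁻¹⁻¹) ^ n := by rw [conj_pow, inv_inv]
    _ = (c * d) ^ n := by rw [inv_inv, hx1]
    _ = c ^ n * d ^ n := (hd c).symm.mul_pow n
  have corey : ∀ n : ℕ, y⁻¹ * c ^ n * y = c ^ n * e ^ n := by
    intro n
    calc y⁻¹ * c ^ n * y = (y⁻¹ * c * y⁻¹⁻¹) ^ n := by rw [conj_pow, inv_inv]
    _ = (c * e) ^ n := by rw [inv_inv, hy1]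
    _ = c ^ n * e ^ n := (he c).symm.mul_pow n
  -- tail move lemmas
  have Mcx0 : ∀ n : ℕ, c ^ n * x = x * (c ^ n * d ^ n) := by
    intro n
    calc c ^ n * x = x * (x⁻¹ * c ^ n * x) := by group
    _ = x * (c ^ n * d ^ n) := by rw [corex]
  have Mcy0 : ∀ n : ℕ, c ^ n * y⁻¹ = y⁻¹ * (c ^ n * e ^ (-(n : ℤ))) := by
    intro n
    have h2 : y * c ^ n * y⁻¹ * e ^ n = c ^ n := by
      calc y * c ^ n * y⁻¹ * e ^ n = y * (c ^ n * (y⁻¹ * e ^ n)) := by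
            simp only [mul_assoc]
      _ = y * (c ^ n * (e ^ n * y⁻¹)) := by rw [((he y⁻¹).pow_left n).eq]
      _ = y * ((y⁻¹ * c ^ n * y) * y⁻¹) := by rw [corey]; simp only [mul_assoc]
      _ = c ^ n := by group
    have h3 : y * c ^ n * y⁻¹ = c ^ n * (e ^ n)⁻¹ := eq_mul_inv_of_mul_eq h2
    calc c ^ n * y⁻¹ = y⁻¹ * (y * c ^ n * y⁻¹) := by group
    _ = y⁻¹ * (c ^ n * (e ^ n)⁻¹) := by rw [h3]
    _ = y⁻¹ * (c ^ n * e ^ (-(n : ℤ))) := by rw [← zpow_natCast e n, ← zpow_neg]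
  -- with-tail move lemmas (simp rule set)
  have Mcx : ∀ (n : ℕ) (g : G), c ^ n * (x * g) = x * (c ^ n * (d ^ n * g)) := by
    intro n g; rw [← mul_assoc, Mcx0]; simp only [mul_assoc]
  have Mcy : ∀ (n : ℕ) (g : G),
      c ^ n * (y⁻¹ * g) = y⁻¹ * (c ^ n * (e ^ (-(n : ℤ)) * g)) := by
    intro n g; rw [← mul_assoc, Mcy0]; simp only [mul_assoc]
  have Mcy1 : ∀ g : G, c * (y⁻¹ * g) = y⁻¹ * (c * (e ^ (-1 : ℤ) * g)) := by
    intro g; have h := Mcy 1 g; simp only [pow_one, Nat.cast_one] at h; exact h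
  have Mcy10 : c * y⁻¹ = y⁻¹ * (c * e ^ (-1 : ℤ)) := by
    have h := Mcy0 1; simp only [pow_one, Nat.cast_one] at h; exact h
  have Mdx0 : ∀ n : ℕ, d ^ n * x = x * d ^ n := fun n => ((hd x).pow_left n).eq
  have Mdx : ∀ (n : ℕ) (g : G), d ^ n * (x * g) = x * (d ^ n * g) := by
    intro n g; rw [← mul_assoc, Mdx0, mul_assoc]
  have Mdy0 : ∀ n : ℕ, d ^ n * y⁻¹ = y⁻¹ * d ^ n := fun n => ((hd y⁻¹).pow_left n).eq
  have Mdy : ∀ (n : ℕ) (g : G), d ^ n * (y⁻¹ * g) = y⁻¹ * (d ^ n * g) := by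
    intro n g; rw [← mul_assoc, Mdy0, mul_assoc]
  have Mex0 : ∀ z : ℤ, e ^ z * x = x * e ^ z := fun z => ((he x).zpow_left z).eq
  have Mex : ∀ (z : ℤ) (g : G), e ^ z * (x * g) = x * (e ^ z * g) := by
    intro z g; rw [← mul_assoc, Mex0, mul_assoc]
  have Mey0 : ∀ z : ℤ, e ^ z * y⁻¹ = y⁻¹ * e ^ z := fun z => ((he y⁻¹).zpow_left z).eq
  have Mey : ∀ (z : ℤ) (g : G), e ^ z * (y⁻¹ * g) = y⁻¹ * (e ^ z * g) := by
    intro z g; rw [← mul_assoc, Mey0, mul_assoc]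
  have Mec0 : ∀ (z : ℤ) (n : ℕ), e ^ z * c ^ n = c ^ n * e ^ z :=
    fun z n => ((he (c ^ n)).zpow_left z).eq
  have Mec : ∀ (z : ℤ) (n : ℕ) (g : G), e ^ z * (c ^ n * g) = c ^ n * (e ^ z * g) := by
    intro z n g; rw [← mul_assoc, Mec0, mul_assoc]
  have Mec10 : ∀ z : ℤ, e ^ z * c = c * e ^ z := fun z => ((he c).zpow_left z).eq
  have Mec1 : ∀ (z : ℤ) (g : G), e ^ z * (c * g) = c * (e ^ z * g) := by
    intro z g; rw [← mul_assoc, Mec10, mul_assoc]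
  have Med0 : ∀ (z : ℤ) (n : ℕ), e ^ z * d ^ n = d ^ n * e ^ z :=
    fun z n => ((he (d ^ n)).zpow_left z).eq
  have Med : ∀ (z : ℤ) (n : ℕ) (g : G), e ^ z * (d ^ n * g) = d ^ n * (e ^ z * g) := by
    intro z n g; rw [← mul_assoc, Med0, mul_assoc]
  -- merge rules
  have MX0 : ∀ n : ℕ, x ^ n * x = x ^ (n + 1) := fun n => (pow_succ x n).symm
  have MX : ∀ (n : ℕ) (g : G), x ^ n * (x * g) = x ^ (n + 1) * g := by
    intro n g; rw [← mul_assoc, MX0]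
  have MY0 : ∀ n : ℕ, (y ^ n)⁻¹ * y⁻¹ = (y ^ (n + 1))⁻¹ := by
    intro n; rw [pow_succ', mul_inv_rev]
  have MY : ∀ (n : ℕ) (g : G), (y ^ n)⁻¹ * (y⁻¹ * g) = (y ^ (n + 1))⁻¹ * g := by
    intro n g; rw [← mul_assoc, MY0]
  have MC0 : ∀ a b : ℕ, c ^ a * c ^ b = c ^ (a + b) := fun a b => (pow_add c a b).symm
  have MC : ∀ (a b : ℕ) (g : G), c ^ a * (c ^ b * g) = c ^ (a + b) * g := by
    intro a b g; rw [← mul_assoc, MC0]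
  have MC10 : ∀ a : ℕ, c ^ a * c = c ^ (a + 1) := fun a => (pow_succ c a).symm
  have MC1 : ∀ (a : ℕ) (g : G), c ^ a * (c * g) = c ^ (a + 1) * g := by
    intro a g; rw [← mul_assoc, MC10]
  have MD0 : ∀ a b : ℕ, d ^ a * d ^ b = d ^ (a + b) := fun a b => (pow_add d a b).symm
  have MD : ∀ (a b : ℕ) (g : G), d ^ a * (d ^ b * g) = d ^ (a + b) * g := by
    intro a b g; rw [← mul_assoc, MD0]
  have ME0 : ∀ a b : ℤ, e ^ a * e ^ b = e ^ (a + b) := fun a b => (zpow_add e a b).symm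
  have ME : ∀ (a b : ℤ) (g : G), e ^ a * (e ^ b * g) = e ^ (a + b) * g := by
    intro a b g; rw [← mul_assoc, ME0]
  -- the key product lemma : moving x past (y^k)⁻¹
  have My0 : ∀ k : ℕ,
      (y ^ k)⁻¹ * x = x * ((y ^ k)⁻¹ * (c ^ k * e ^ (-(Nat.choose (k + 1) 2 : ℤ)))) := by
    intro k
    induction k with
    | zero => simp
    | succ n ih =>
      have hyx : y⁻¹ * x = x * (y⁻¹ * (c * e ^ (-1 : ℤ))) := by
        calc y⁻¹ * x = (y⁻¹ * x * y) * y⁻¹ := by group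
        _ = x * (c * y⁻¹) := by rw [hc]; simp only [mul_assoc]
        _ = x * (y⁻¹ * (c * e ^ (-1 : ℤ))) := by rw [Mcy10]
      calc (y ^ (n + 1))⁻¹ * x = (y ^ n)⁻¹ * (y⁻¹ * x) := by
            rw [pow_succ', mul_inv_rev, mul_assoc]
      _ = (y ^ n)⁻¹ * (x * (y⁻¹ * (c * e ^ (-1 : ℤ)))) := by rw [hyx]
      _ = ((y ^ n)⁻¹ * x) * (y⁻¹ * (c * e ^ (-1 : ℤ))) := by rw [mul_assoc]
      _ = x * ((y ^ n)⁻¹ * (c ^ n * e ^ (-(Nat.choose (n + 1) 2 : ℤ)))) *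
            (y⁻¹ * (c * e ^ (-1 : ℤ))) := by rw [ih]
      _ = x * ((y ^ (n + 1))⁻¹ * (c ^ (n + 1) *
            e ^ (-(Nat.choose (n + 2) 2 : ℤ)))) := by
        simp only [mul_assoc, Mey, Mcy1, Mcy, Mec1, Mec, MY, MC, MC1, ME, ME0]
        have h := choose_succ_two (n + 1)
        congr 5
        push_cast [h]
        omega
  have My : ∀ (k : ℕ) (g : G), (y ^ k)⁻¹ * (x * g) =
      x * ((y ^ k)⁻¹ * (c ^ k * (e ^ (-(Nat.choose (k + 1) 2 : ℤ)) * g))) := by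
    intro k g; rw [← mul_assoc, My0]; simp only [mul_assoc]
  induction m with
  | zero => simp
  | succ n ih =>
    rw [pow_succ, ih, choose_succ_two, choose_succ_three]
    simp only [mul_assoc]
    simp only [Mex, Mdx, Mcx, My, MX, Mex0, Mdx0, Mcx0, Mey0, Mey, Mdy, Mdy0, Mcy,
      Mcy0, Mec, Mec0, Med, Med0, MY, MY0, MC, MC0, ME, ME0, MD, MD0, MX0]
    have h2 : 2 * (Nat.choose n 2 : ℤ) + n = n * n := by exact_mod_cast two_choose n
    congr 5
    push_cast [choose_succ_two n]
    linear_combination -h2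

end Key

open scoped commutatorElement

private lemma pcomm_eq {G : Type*} [Group G] (a b : G) : pcomm a b = ⁅a⁻¹, b⁻¹⁆ := by
  simp [pcomm, commutatorElement_def, mul_assoc]

/-- In a nilpotent group of class 3,
`(xy⁻¹)^m = xᵐ y⁻ᵐ [x,y]^{C(m,2)} [x,y,x]^{C(m,3)} [x,y,y]^{C(m,3) - m·C(m,2)}`. -/
theorem stmt_6 {G : Type*} [Group G] (h4 : Subgroup.lowerCentralSeries (⊤ : Subgroup G) 3 = ⊥)
    (x y : G) (m : ℕ) :
    (x * y⁻¹) ^ m =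
      x ^ m * (y ^ m)⁻¹ * (pcomm x y) ^ (Nat.choose m 2) *
        (pcomm (pcomm x y) x) ^ (Nat.choose m 3) *
        (pcomm (pcomm x y) y) ^
          ((Nat.choose m 3 : ℤ) - (m : ℤ) * (Nat.choose m 2 : ℤ)) := by
  have m1 : pcomm x y ∈ Subgroup.lowerCentralSeries (⊤ : Subgroup G) 1 := by
    have h1 : Subgroup.lowerCentralSeries (⊤ : Subgroup G) 1 = ⁅(⊤ : Subgroup G), (⊤ : Subgroup G)⁆ := rfl
    rw [h1, pcomm_eq]
    exact Subgroup.commutator_mem_commutator (Subgroup.mem_top _) (Subgroup.mem_top _)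
  have m2 : ∀ b : G, pcomm (pcomm x y) b ∈ Subgroup.lowerCentralSeries (⊤ : Subgroup G) 2 := by
    intro b
    have h2 : Subgroup.lowerCentralSeries (⊤ : Subgroup G) 2 = ⁅Subgroup.lowerCentralSeries (⊤ : Subgroup G) 1, (⊤ : Subgroup G)⁆ := rfl
    rw [h2, pcomm_eq]
    exact Subgroup.commutator_mem_commutator (inv_mem m1) (Subgroup.mem_top _)
  have hcent : ∀ b g : G, Commute (pcomm (pcomm x y) b) g := by
    intro b g
    have h : ⁅pcomm (pcomm x y) b, g⁆ ∈ Subgroup.lowerCentralSeries (⊤ : Subgroup G) 3 := by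
      have h3 : Subgroup.lowerCentralSeries (⊤ : Subgroup G) 3 = ⁅Subgroup.lowerCentralSeries (⊤ : Subgroup G) 2, (⊤ : Subgroup G)⁆ := rfl
      rw [h3]
      exact Subgroup.commutator_mem_commutator (m2 b) (Subgroup.mem_top _)
    rw [h4, Subgroup.mem_bot] at h
    exact commutatorElement_eq_one_iff_commute.mp h
  refine key x y (pcomm x y) (pcomm (pcomm x y) x) (pcomm (pcomm x y) y)
    (hcent x) (hcent y) ?_ ?_ ?_ m
  · show pcomm x y * x = x * (pcomm x y * pcomm (pcomm x y) x)
    simp only [pcomm]; group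
  · show pcomm x y * y = y * (pcomm x y * pcomm (pcomm x y) y)
    simp only [pcomm]; group
  · show y⁻¹ * x * y = x * pcomm x y
    simp only [pcomm]; group
end

section
/- Let G be a nilpotent group of class 3 and x,y ∈ G. Then for nonnegative integers i,j,k,l: [x^i y^j, x^k y^l] = [x,y]^{il-jk} · [x,y,x]^{l·C(i,2) - j·C(k,2)} · [x,y,y]^{ijl - kjl + i·C(l,2) - k·C(j,2)}. -/
open scoped commutatorElement


section aux

variable {G : Type*} [Group G]

/-- `pcomm a b` equals the Mathlib commutator of the inverses. -/
lemma pcomm_eq_commutator (a b : G) : pcomm a b = ⁅a⁻¹, b⁻¹⁆ := by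
  simp [pcomm, commutatorElement_def]

/-- Conjugating a `c`-zpower by `x^k`, assuming `x⁻¹cx = cu` with `u` central. -/
lemma aux_conj_zpow (x c u : G) (h : x⁻¹ * c * x = c * u) (hu : ∀ g : G, Commute u g)
    (m : ℤ) : ∀ k : ℕ, (x ^ k)⁻¹ * c ^ m * x ^ k = c ^ m * u ^ (m * k) := by
  have h1 : x⁻¹ * c ^ m * x = c ^ m * u ^ m := by
    have h2 : x⁻¹ * c ^ m * x = (x⁻¹ * c * x) ^ m := by
      have := conj_zpow (i := m) (a := x⁻¹) (b := c)
      simpa using this.symm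
    rw [h2, h, ((hu c).symm.mul_zpow m)]
  intro k
  induction k with
  | zero => simp
  | succ n ih =>
    have hx : Commute (u ^ (m * n)) x := ((hu x).zpow_left _)
    calc (x ^ (n + 1))⁻¹ * c ^ m * x ^ (n + 1)
        = x⁻¹ * ((x ^ n)⁻¹ * c ^ m * x ^ n) * x := by rw [pow_succ]; group
      _ = x⁻¹ * (c ^ m * u ^ (m * n)) * x := by rw [ih]
      _ = (x⁻¹ * c ^ m) * (u ^ (m * n) * x) := by group
      _ = (x⁻¹ * c ^ m) * (x * u ^ (m * n)) := by rw [hx.eq]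
      _ = (x⁻¹ * c ^ m * x) * u ^ (m * n) := by group
      _ = (c ^ m * u ^ m) * u ^ (m * n) := by rw [h1]
      _ = c ^ m * u ^ (m * (n + 1 : ℕ)) := by push_cast; group

/-- Conjugating an element `a` by `x^k`, where `x⁻¹ax = ac`, `x⁻¹cx = cu`, `u` central. -/
lemma aux_conj_elt (x a c u : G) (h1 : x⁻¹ * a * x = a * c) (h2 : x⁻¹ * c * x = c * u)
    (hu : ∀ g : G, Commute u g) :
    ∀ k : ℕ, (x ^ k)⁻¹ * a * x ^ k = a * c ^ (k : ℤ) * u ^ (Nat.choose k 2 : ℤ) := by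
  intro k
  induction k with
  | zero => simp
  | succ n ih =>
    have hck : x⁻¹ * c ^ (n : ℤ) * x = c ^ (n : ℤ) * u ^ ((n : ℤ) * (1 : ℕ)) :=
      aux_conj_zpow x c u h2 hu (n : ℤ) 1 |>.symm ▸ (by
        have := aux_conj_zpow x c u h2 hu (n : ℤ) 1
        simpa using this)
    have hxu : Commute (u ^ (Nat.choose n 2 : ℤ)) x := ((hu x).zpow_left _)
    have hchoose : Nat.choose (n + 1) 2 = n + Nat.choose n 2 := by
      rw [Nat.choose_succ_succ, Nat.choose_one_right]
    calc (x ^ (n + 1))⁻¹ * a * x ^ (n + 1)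
        = x⁻¹ * ((x ^ n)⁻¹ * a * x ^ n) * x := by rw [pow_succ]; group
      _ = x⁻¹ * (a * c ^ (n : ℤ) * u ^ (Nat.choose n 2 : ℤ)) * x := by rw [ih]
      _ = (x⁻¹ * a * c ^ (n : ℤ)) * (u ^ (Nat.choose n 2 : ℤ) * x) := by group
      _ = (x⁻¹ * a * c ^ (n : ℤ)) * (x * u ^ (Nat.choose n 2 : ℤ)) := by rw [hxu.eq]
      _ = (x⁻¹ * a * x) * (x⁻¹ * c ^ (n : ℤ) * x) * u ^ (Nat.choose n 2 : ℤ) := by group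
      _ = (a * c) * (c ^ (n : ℤ) * u ^ ((n : ℤ) * (1 : ℕ))) * u ^ (Nat.choose n 2 : ℤ) := by
          rw [h1, hck]
      _ = a * c ^ ((n + 1 : ℕ) : ℤ) * u ^ (Nat.choose (n + 1) 2 : ℤ) := by
          rw [hchoose]; push_cast; group

/-- Power of `x * c^m` with `x⁻¹cx = cu`, `u` central. -/
lemma aux_pow_mul (x c u : G) (h2 : x⁻¹ * c * x = c * u) (hu : ∀ g : G, Commute u g)
    (m : ℤ) : ∀ n : ℕ, (x * c ^ m) ^ n
      = x ^ n * c ^ (m * n) * u ^ (m * (Nat.choose n 2 : ℤ)) := by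
  intro n
  induction n with
  | zero => simp
  | succ n ih =>
    have hmove : c ^ (m * (n : ℤ)) * x = x * (c ^ (m * (n : ℤ)) * u ^ (m * (n : ℤ))) := by
      have h := aux_conj_zpow x c u h2 hu (m * (n : ℤ)) 1
      simp only [pow_one, Nat.cast_one, mul_one] at h
      calc c ^ (m * (n : ℤ)) * x = x * (x⁻¹ * c ^ (m * (n : ℤ)) * x) := by group
        _ = x * (c ^ (m * (n : ℤ)) * u ^ (m * (n : ℤ))) := by rw [h]
    have hu1 : Commute (u ^ (m * (Nat.choose n 2 : ℤ))) (x * c ^ m) := ((hu _).zpow_left _)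
    have hu2 : Commute (u ^ (m * (n : ℤ))) (c ^ m) := (((hu _).zpow_left _).zpow_right _)
    have hchoose : Nat.choose (n + 1) 2 = n + Nat.choose n 2 := by
      rw [Nat.choose_succ_succ, Nat.choose_one_right]
    calc (x * c ^ m) ^ (n + 1)
        = (x ^ n * c ^ (m * n) * u ^ (m * (Nat.choose n 2 : ℤ))) * (x * c ^ m) := by
          rw [pow_succ, ih]
      _ = (x ^ n * c ^ (m * n)) * (u ^ (m * (Nat.choose n 2 : ℤ)) * (x * c ^ m)) := by group
      _ = (x ^ n * c ^ (m * n)) * ((x * c ^ m) * u ^ (m * (Nat.choose n 2 : ℤ))) := by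
          rw [hu1.eq]
      _ = x ^ n * (c ^ (m * (n : ℤ)) * x) * c ^ m * u ^ (m * (Nat.choose n 2 : ℤ)) := by group
      _ = x ^ n * (x * (c ^ (m * (n : ℤ)) * u ^ (m * (n : ℤ)))) * c ^ m
            * u ^ (m * (Nat.choose n 2 : ℤ)) := by rw [hmove]
      _ = x ^ n * x * c ^ (m * (n : ℤ)) * (u ^ (m * (n : ℤ)) * c ^ m)
            * u ^ (m * (Nat.choose n 2 : ℤ)) := by group
      _ = x ^ n * x * c ^ (m * (n : ℤ)) * (c ^ m * u ^ (m * (n : ℤ)))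
            * u ^ (m * (Nat.choose n 2 : ℤ)) := by rw [hu2.eq]
      _ = x ^ (n + 1) * c ^ (m * (n + 1 : ℕ)) * u ^ (m * (Nat.choose (n + 1) 2 : ℤ)) := by
          rw [hchoose, pow_succ]; push_cast; group

end aux

/-- In a nilpotent group of class 3, for nonnegative integers i,j,k,l:
`[xⁱyʲ, xᵏyˡ] = [x,y]^{il-jk} [x,y,x]^{l·C(i,2)-j·C(k,2)} [x,y,y]^{ijl-kjl+i·C(l,2)-k·C(j,2)}`. -/
theorem stmt_7 {G : Type*} [Group G] (h4 : (⊤ : Subgroup G).lowerCentralSeries 3 = ⊥)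
    (x y : G) (i j k l : ℕ) :
    pcomm (x ^ i * y ^ j) (x ^ k * y ^ l) =
      (pcomm x y) ^ ((i : ℤ) * l - (j : ℤ) * k) *
        (pcomm (pcomm x y) x) ^ ((l : ℤ) * Nat.choose i 2 - (j : ℤ) * Nat.choose k 2) *
        (pcomm (pcomm x y) y) ^
          ((i : ℤ) * j * l - (k : ℤ) * j * l + (i : ℤ) * Nat.choose l 2 -
            (k : ℤ) * Nat.choose j 2) := by
  set c := pcomm x y with hc
  set u := pcomm c x with hu_def
  set v := pcomm c y with hv_def
  -- centrality of lowerCentralSeries G 2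
  have hcent : ∀ w ∈ (⊤ : Subgroup G).lowerCentralSeries 2, ∀ g : G, Commute w g := by
    intro w hw g
    have hm : ⁅w, g⁆ ∈ (⊤ : Subgroup G).lowerCentralSeries (2 + 1) := by
      rw [Subgroup.lowerCentralSeries_succ]
      exact Subgroup.commutator_mem_commutator hw (Subgroup.mem_top g)
    have h1 : ⁅w, g⁆ = 1 := by
      rw [← Subgroup.mem_bot, ← h4]; exact hm
    exact commutatorElement_eq_one_iff_mul_comm.mp h1
  have hc_mem : c ∈ (⊤ : Subgroup G).lowerCentralSeries 1 := by
    rw [Subgroup.top_lowerCentralSeries_one, commutator_def, hc, pcomm_eq_commutator]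
    exact Subgroup.commutator_mem_commutator (Subgroup.mem_top _) (Subgroup.mem_top _)
  have hu : ∀ g : G, Commute u g := by
    intro g
    refine hcent u ?_ g
    show u ∈ (⊤ : Subgroup G).lowerCentralSeries (1 + 1)
    rw [Subgroup.lowerCentralSeries_succ, hu_def, pcomm_eq_commutator]
    exact Subgroup.commutator_mem_commutator (((⊤ : Subgroup G).lowerCentralSeries 1).inv_mem hc_mem)
      (Subgroup.mem_top _)
  have hv : ∀ g : G, Commute v g := by
    intro g
    refine hcent v ?_ g
    show v ∈ (⊤ : Subgroup G).lowerCentralSeries (1 + 1)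
    rw [Subgroup.lowerCentralSeries_succ, hv_def, pcomm_eq_commutator]
    exact Subgroup.commutator_mem_commutator (((⊤ : Subgroup G).lowerCentralSeries 1).inv_mem hc_mem)
      (Subgroup.mem_top _)
  -- the basic relations
  have hcx : x⁻¹ * c * x = c * u := by rw [hu_def, hc]; simp only [pcomm]; group
  have hcy : y⁻¹ * c * y = c * v := by rw [hv_def, hc]; simp only [pcomm]; group
  have hxy : y⁻¹ * x * y = x * c := by rw [hc]; simp only [pcomm]; group
  have hyx : x⁻¹ * y * x = y * c⁻¹ := by rw [hc]; simp only [pcomm]; group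
  have hcx' : x⁻¹ * c⁻¹ * x = c⁻¹ * u⁻¹ := by
    have h0 : x⁻¹ * c⁻¹ * x = (x⁻¹ * c * x)⁻¹ := by group
    rw [h0, hcx, mul_inv_rev, (hu c⁻¹).inv_left.eq]
  have hu' : ∀ g : G, Commute u⁻¹ g := fun g => (hu g).inv_left
  -- conjugation lemmas
  have P2 : ∀ n : ℕ, (y ^ n)⁻¹ * x * y ^ n = x * c ^ (n : ℤ) * v ^ (Nat.choose n 2 : ℤ) :=
    aux_conj_elt y x c v hxy hcy hv
  have P1 : ∀ n : ℕ, (x ^ n)⁻¹ * y * x ^ n = y * c⁻¹ ^ (n : ℤ) * u⁻¹ ^ (Nat.choose n 2 : ℤ) :=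
    aux_conj_elt x y c⁻¹ u⁻¹ hyx hcx' hu'
  have P3 : ∀ (m : ℤ) (n : ℕ), (x ^ n)⁻¹ * c ^ m * x ^ n = c ^ m * u ^ (m * n) :=
    fun m n => aux_conj_zpow x c u hcx hu m n
  have P4 : ∀ (m : ℤ) (n : ℕ), (y ^ n)⁻¹ * c ^ m * y ^ n = c ^ m * v ^ (m * n) :=
    fun m n => aux_conj_zpow y c v hcy hv m n
  set B := x ^ k * y ^ l with hB
  -- conjugate of x by B
  have cxB : B⁻¹ * x * B = x * c ^ (l : ℤ) * v ^ (Nat.choose l 2 : ℤ) := by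
    calc B⁻¹ * x * B = (y ^ l)⁻¹ * ((x ^ k)⁻¹ * x * x ^ k) * y ^ l := by rw [hB]; group
      _ = (y ^ l)⁻¹ * x * y ^ l := by rw [show (x ^ k)⁻¹ * x * x ^ k = x by group]
      _ = x * c ^ (l : ℤ) * v ^ (Nat.choose l 2 : ℤ) := P2 l
  -- conjugate of y by B
  have cyB : B⁻¹ * y * B
      = y * c ^ (-(k : ℤ)) * (v ^ (-(k : ℤ) * l) * u ^ (-(Nat.choose k 2 : ℤ))) := by
    have hul : Commute (u ^ (-(Nat.choose k 2 : ℤ))) (y ^ l) := ((hu _).zpow_left _)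
    calc B⁻¹ * y * B = (y ^ l)⁻¹ * ((x ^ k)⁻¹ * y * x ^ k) * y ^ l := by rw [hB]; group
      _ = (y ^ l)⁻¹ * (y * c⁻¹ ^ (k : ℤ) * u⁻¹ ^ (Nat.choose k 2 : ℤ)) * y ^ l := by rw [P1 k]
      _ = (y ^ l)⁻¹ * (y * c ^ (-(k : ℤ))) * (u ^ (-(Nat.choose k 2 : ℤ)) * y ^ l) := by
          rw [inv_zpow, ← zpow_neg, inv_zpow, ← zpow_neg]; group
      _ = (y ^ l)⁻¹ * (y * c ^ (-(k : ℤ))) * (y ^ l * u ^ (-(Nat.choose k 2 : ℤ))) := by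
          rw [hul.eq]
      _ = ((y ^ l)⁻¹ * y * y ^ l) * ((y ^ l)⁻¹ * c ^ (-(k : ℤ)) * y ^ l)
            * u ^ (-(Nat.choose k 2 : ℤ)) := by group
      _ = y * (c ^ (-(k : ℤ)) * v ^ (-(k : ℤ) * l)) * u ^ (-(Nat.choose k 2 : ℤ)) := by
          rw [P4 (-(k : ℤ)) l, show (y ^ l)⁻¹ * y * y ^ l = y by group]
      _ = y * c ^ (-(k : ℤ)) * (v ^ (-(k : ℤ) * l) * u ^ (-(Nat.choose k 2 : ℤ))) := by group
  -- conjugate of x^i by B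
  have cxiB : B⁻¹ * x ^ i * B
      = x ^ i * c ^ ((l : ℤ) * i) * (u ^ ((l : ℤ) * (Nat.choose i 2 : ℤ))
          * v ^ ((Nat.choose l 2 : ℤ) * i)) := by
    have hconj : B⁻¹ * x ^ i * B = (B⁻¹ * x * B) ^ i := by
      have := conj_pow (i := i) (a := B⁻¹) (b := x)
      simpa using this.symm
    have hcomm : Commute (x * c ^ (l : ℤ)) (v ^ (Nat.choose l 2 : ℤ)) :=
      ((hv _).zpow_left _).symm
    rw [hconj, cxB, hcomm.mul_pow, aux_pow_mul x c u hcx hu (l : ℤ) i,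
      ← zpow_natCast (v ^ (Nat.choose l 2 : ℤ)) i, ← zpow_mul]
    push_cast
    group
  -- conjugate of y^j by B
  have cyjB : B⁻¹ * y ^ j * B
      = y ^ j * c ^ (-(k : ℤ) * j) * (v ^ (-(k : ℤ) * (Nat.choose j 2 : ℤ))
          * (v ^ (-(k : ℤ) * l * j) * u ^ (-(Nat.choose k 2 : ℤ) * j))) := by
    have hconj : B⁻¹ * y ^ j * B = (B⁻¹ * y * B) ^ j := by
      have := conj_pow (i := j) (a := B⁻¹) (b := y)
      simpa using this.symm
    have hz : Commute (y * c ^ (-(k : ℤ)))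
        (v ^ (-(k : ℤ) * l) * u ^ (-(Nat.choose k 2 : ℤ))) :=
      (((hv _).zpow_left _).symm.mul_right ((hu _).zpow_left _).symm)
    have hz2 : Commute (v ^ (-(k : ℤ) * l)) (u ^ (-(Nat.choose k 2 : ℤ))) :=
      ((hu (v ^ (-(k : ℤ) * l))).zpow_left (-(Nat.choose k 2 : ℤ))).symm
    rw [hconj, cyB, hz.mul_pow, aux_pow_mul y c v hcy hv (-(k : ℤ)) j, hz2.mul_pow,
      ← zpow_natCast (v ^ (-(k : ℤ) * l)) j, ← zpow_mul,
      ← zpow_natCast (u ^ (-(Nat.choose k 2 : ℤ))) j, ← zpow_mul]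
    group
  -- assemble
  have key : pcomm (x ^ i * y ^ j) B
      = (x ^ i * y ^ j)⁻¹ * (B⁻¹ * x ^ i * B) * (B⁻¹ * y ^ j * B) := by
    simp only [pcomm]; group
  rw [key, cxiB, cyjB]
  set U1 : G := u ^ ((l : ℤ) * (Nat.choose i 2 : ℤ)) * v ^ ((Nat.choose l 2 : ℤ) * i) with hU1
  set U2 : G := v ^ (-(k : ℤ) * (Nat.choose j 2 : ℤ))
      * (v ^ (-(k : ℤ) * l * j) * u ^ (-(Nat.choose k 2 : ℤ) * j)) with hU2
  have hU1c : ∀ g : G, Commute U1 g := fun g =>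
    (((hu g).zpow_left _).mul_left ((hv g).zpow_left _))
  have hU2c : ∀ g : G, Commute U2 g := fun g =>
    (((hv g).zpow_left _).mul_left (((hv g).zpow_left _).mul_left ((hu g).zpow_left _)))
  have Hyc : (y ^ j)⁻¹ * c ^ ((l : ℤ) * i) * y ^ j
      = c ^ ((l : ℤ) * i) * v ^ ((l : ℤ) * i * j) := P4 ((l : ℤ) * i) j
  have hvc : Commute (v ^ ((l : ℤ) * i * j)) (c ^ (-(k : ℤ) * j)) := ((hv _).zpow_left _).zpow_right _
  calc (x ^ i * y ^ j)⁻¹ * (x ^ i * c ^ ((l : ℤ) * i) * U1)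
        * (y ^ j * c ^ (-(k : ℤ) * j) * U2)
      = (x ^ i * y ^ j)⁻¹ * (x ^ i * c ^ ((l : ℤ) * i)) * (U1 * (y ^ j * c ^ (-(k : ℤ) * j)))
          * U2 := by group
    _ = (x ^ i * y ^ j)⁻¹ * (x ^ i * c ^ ((l : ℤ) * i)) * ((y ^ j * c ^ (-(k : ℤ) * j)) * U1)
          * U2 := by rw [(hU1c _).eq]
    _ = ((y ^ j)⁻¹ * c ^ ((l : ℤ) * i) * y ^ j) * c ^ (-(k : ℤ) * j) * (U1 * U2) := by group
    _ = c ^ ((l : ℤ) * i) * v ^ ((l : ℤ) * i * j) * c ^ (-(k : ℤ) * j) * (U1 * U2) := by rw [Hyc]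
    _ = c ^ ((l : ℤ) * i) * (c ^ (-(k : ℤ) * j) * v ^ ((l : ℤ) * i * j)) * (U1 * U2) := by
        rw [mul_assoc (c ^ ((l : ℤ) * i)), hvc.eq]
    _ = c ^ ((i : ℤ) * l - (j : ℤ) * k) *
        u ^ ((l : ℤ) * Nat.choose i 2 - (j : ℤ) * Nat.choose k 2) *
        v ^ ((i : ℤ) * j * l - (k : ℤ) * j * l + (i : ℤ) * Nat.choose l 2 -
            (k : ℤ) * Nat.choose j 2) := by
        rw [hU1, hU2]
        have h1 : ∀ (a b : ℤ), v ^ a * u ^ b = u ^ b * v ^ a := fun a b =>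
          (((hu (v ^ a)).zpow_left b).symm).eq
        calc c ^ ((l : ℤ) * i) * (c ^ (-(k : ℤ) * j) * v ^ ((l : ℤ) * i * j)) *
              (u ^ ((l : ℤ) * (Nat.choose i 2 : ℤ)) * v ^ ((Nat.choose l 2 : ℤ) * i) *
               (v ^ (-(k : ℤ) * (Nat.choose j 2 : ℤ)) *
                (v ^ (-(k : ℤ) * l * j) * u ^ (-(Nat.choose k 2 : ℤ) * j))))
            = c ^ ((l : ℤ) * i) * c ^ (-(k : ℤ) * j) *
              (v ^ ((l : ℤ) * i * j) * u ^ ((l : ℤ) * (Nat.choose i 2 : ℤ))) *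
              (v ^ ((Nat.choose l 2 : ℤ) * i) * (v ^ (-(k : ℤ) * (Nat.choose j 2 : ℤ)) *
               (v ^ (-(k : ℤ) * l * j) * u ^ (-(Nat.choose k 2 : ℤ) * j)))) := by group
          _ = c ^ ((l : ℤ) * i) * c ^ (-(k : ℤ) * j) *
              (u ^ ((l : ℤ) * (Nat.choose i 2 : ℤ)) * v ^ ((l : ℤ) * i * j)) *
              (v ^ ((Nat.choose l 2 : ℤ) * i) * (v ^ (-(k : ℤ) * (Nat.choose j 2 : ℤ)) *
               (v ^ (-(k : ℤ) * l * j) * u ^ (-(Nat.choose k 2 : ℤ) * j)))) := by rw [h1]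
          _ = c ^ ((l : ℤ) * i) * c ^ (-(k : ℤ) * j) * u ^ ((l : ℤ) * (Nat.choose i 2 : ℤ)) *
              (v ^ ((l : ℤ) * i * j) * v ^ ((Nat.choose l 2 : ℤ) * i) *
               v ^ (-(k : ℤ) * (Nat.choose j 2 : ℤ)) * v ^ (-(k : ℤ) * l * j))
              * u ^ (-(Nat.choose k 2 : ℤ) * j) := by group
          _ = c ^ ((i : ℤ) * l - (j : ℤ) * k) *
              u ^ ((l : ℤ) * Nat.choose i 2 - (j : ℤ) * Nat.choose k 2) *
              v ^ ((i : ℤ) * j * l - (k : ℤ) * j * l + (i : ℤ) * Nat.choose l 2 -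
                  (k : ℤ) * Nat.choose j 2) := by
              rw [mul_assoc (c ^ ((l : ℤ) * i) * c ^ (-(k : ℤ) * j) *
                    u ^ ((l : ℤ) * (Nat.choose i 2 : ℤ)))
                  (v ^ ((l : ℤ) * i * j) * v ^ ((Nat.choose l 2 : ℤ) * i) *
                    v ^ (-(k : ℤ) * (Nat.choose j 2 : ℤ)) * v ^ (-(k : ℤ) * l * j))
                  (u ^ (-(Nat.choose k 2 : ℤ) * j)),
                ((hu (v ^ ((l : ℤ) * i * j) * v ^ ((Nat.choose l 2 : ℤ) * i) *
                    v ^ (-(k : ℤ) * (Nat.choose j 2 : ℤ)) * v ^ (-(k : ℤ) * l * j))).zpow_left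
                  (-(Nat.choose k 2 : ℤ) * j)).symm.eq]
              push_cast
              group
end

section
/- Let G be a finite p-group of nilpotency class 3 generated by x,y such that each of the maps x↦y,y↦x; x↦x⁻¹,y↦y; x↦xy,y↦y extends to an automorphism of G. Set z=[x,y], u=[z,x], v=[z,y]. If o(u)=o(v)=p^c and ⟨u⟩∩⟨v⟩=1 hold together with ⟨z⟩∩⟨u,v⟩ cyclic generated by some z^k with z^k=u^i v^j, then ⟨u⟩∩⟨v⟩=1 implies ⟨z⟩∩⟨u,v⟩=1. -/
open scoped commutatorElement

private lemma lcs_succ' (G : Type*) [Group G] (n : ℕ) :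
    (⊤ : Subgroup G).lowerCentralSeries (n+1) = ⁅(⊤ : Subgroup G).lowerCentralSeries n, ⊤⁆ := by
  rfl

private lemma cmove {G : Type*} [Group G] {c : G} (hc : ∀ g, c * g = g * c) (a : G) :
    (a * c = c * a) ∧ (∀ w, a * (c * w) = c * (a * w)) ∧
    (a * c⁻¹ = c⁻¹ * a) ∧ (∀ w, a * (c⁻¹ * w) = c⁻¹ * (a * w)) := by
  have hci : ∀ g, c⁻¹ * g = g * c⁻¹ := fun g => (Commute.inv_left (hc g)).eq
  exact ⟨(hc a).symm, fun w => by rw [← mul_assoc, ← hc a, mul_assoc],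
    (hci a).symm, fun w => by rw [← mul_assoc, ← hci a, mul_assoc]⟩

private lemma zmove {G : Type*} [Group G] {z a c : G} (h : c = pcomm z a)
    (hc : ∀ g : G, c * g = g * c) :
    (z * a = a * (z * c)) ∧ (∀ w, z * (a * w) = a * (z * (c * w))) ∧
    (z⁻¹ * a = a * (c⁻¹ * z⁻¹)) ∧ (∀ w, z⁻¹ * (a * w) = a * (c⁻¹ * (z⁻¹ * w))) ∧
    (z * a⁻¹ = a⁻¹ * (z * c⁻¹)) ∧ (∀ w, z * (a⁻¹ * w) = a⁻¹ * (z * (c⁻¹ * w))) ∧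
    (z⁻¹ * a⁻¹ = a⁻¹ * (c * z⁻¹)) ∧ (∀ w, z⁻¹ * (a⁻¹ * w) = a⁻¹ * (c * (z⁻¹ * w))) := by
  have hcinv : ∀ g : G, c⁻¹ * g = g * c⁻¹ := fun g => (Commute.inv_left (hc g)).eq
  have e1 : z * a = a * (z * c) := by rw [h, pcomm]; group
  have X : a * z = z * (c⁻¹ * a) := by
    calc a * z = z * (z⁻¹ * a * z * a⁻¹) * a := by group
      _ = z * (a * c⁻¹ * a⁻¹) * a := by
            rw [show z⁻¹ * a * z * a⁻¹ = a * c⁻¹ * a⁻¹ from by rw [h, pcomm]; group]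
      _ = z * (c⁻¹ * a) := by rw [← hcinv a]; group
  have e2 : z * a⁻¹ = a⁻¹ * (z * c⁻¹) := by
    calc z * a⁻¹ = a⁻¹ * (a * z) * a⁻¹ := by group
      _ = a⁻¹ * (z * (c⁻¹ * a)) * a⁻¹ := by rw [X]
      _ = a⁻¹ * (z * c⁻¹) := by group
  have e3 : z⁻¹ * a = a * (c⁻¹ * z⁻¹) := by rw [h, pcomm]; group
  have e4 : z⁻¹ * a⁻¹ = a⁻¹ * (c * z⁻¹) := by
    calc z⁻¹ * a⁻¹ = (a * z)⁻¹ := by group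
      _ = (z * (c⁻¹ * a))⁻¹ := by rw [X]
      _ = a⁻¹ * (c * z⁻¹) := by group
  exact ⟨e1, fun w => by rw [← mul_assoc, e1]; group,
    e3, fun w => by rw [← mul_assoc, e3]; group,
    e2, fun w => by rw [← mul_assoc, e2]; group,
    e4, fun w => by rw [← mul_assoc, e4]; group⟩

/-- Let `G` be a finite `p`-group of class 3 generated by `x, y`, such that the
three assignments `x↦y, y↦x`; `x↦x⁻¹, y↦y`; `x↦xy, y↦y` extend to automorphisms
of `G`.  With `z=[x,y]`, `u=[z,x]`, `v=[z,y]` of orders `o(u)=o(v)=p^c`,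
if `⟨u⟩ ∩ ⟨v⟩ = 1` then `⟨z⟩ ∩ ⟨u,v⟩ = 1`. -/
theorem stmt_14 {G : Type*} [Group G] [Finite G] (p : ℕ) (hp : p.Prime)
    (hpG : IsPGroup p G)
    (h4 : (⊤ : Subgroup G).lowerCentralSeries 3 = ⊥) (h3 : (⊤ : Subgroup G).lowerCentralSeries 2 ≠ ⊥)
    (x y : G) (hgen : Subgroup.closure {x, y} = ⊤)
    (hτ : ∃ τ : G ≃* G, τ x = y ∧ τ y = x)
    (hπ : ∃ π : G ≃* G, π x = x⁻¹ ∧ π y = y)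
    (hζ : ∃ ζ : G ≃* G, ζ x = x * y ∧ ζ y = y)
    (z u v : G) (hz : z = pcomm x y) (hu : u = pcomm z x) (hv : v = pcomm z y)
    (c : ℕ) (hou : orderOf u = p ^ c) (hov : orderOf v = p ^ c)
    (huv : Subgroup.zpowers u ⊓ Subgroup.zpowers v = ⊥) :
    Subgroup.zpowers z ⊓ Subgroup.closure {u, v} = ⊥ := by
  obtain ⟨τ, hτx, hτy⟩ := hτ
  obtain ⟨π, hπx, hπy⟩ := hπ
  obtain ⟨ζ, hζx, hζy⟩ := hζ
  -- z lies in γ₂, u and v lie in γ₃ which is central (γ₄ = 1)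
  have hzmem : z ∈ (⊤ : Subgroup G).lowerCentralSeries 1 := by
    rw [show z = ⁅x⁻¹, y⁻¹⁆ from by rw [hz, pcomm]; group, lcs_succ']
    exact Subgroup.commutator_mem_commutator (Subgroup.mem_top _) (Subgroup.mem_top _)
  have humem : u ∈ (⊤ : Subgroup G).lowerCentralSeries 2 := by
    rw [show u = ⁅z⁻¹, x⁻¹⁆ from by rw [hu, pcomm]; group, lcs_succ']
    exact Subgroup.commutator_mem_commutator (inv_mem hzmem) (Subgroup.mem_top _)
  have hvmem : v ∈ (⊤ : Subgroup G).lowerCentralSeries 2 := by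
    rw [show v = ⁅z⁻¹, y⁻¹⁆ from by rw [hv, pcomm]; group, lcs_succ']
    exact Subgroup.commutator_mem_commutator (inv_mem hzmem) (Subgroup.mem_top _)
  have central : ∀ w ∈ (⊤ : Subgroup G).lowerCentralSeries 2, ∀ g : G, w * g = g * w := by
    intro w hw g
    have h1 : ⁅w, g⁆ ∈ (⊤ : Subgroup G).lowerCentralSeries 3 := by
      rw [lcs_succ']
      exact Subgroup.commutator_mem_commutator hw (Subgroup.mem_top _)
    rw [h4, Subgroup.mem_bot] at h1
    exact commutatorElement_eq_one_iff_commute.mp h1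
  have hucen : ∀ g : G, u * g = g * u := central u humem
  have hvcen : ∀ g : G, v * g = g * v := central v hvmem
  -- the automorphisms' action on z, u, v
  have hτz : τ z = z⁻¹ := by
    rw [hz, pcomm]; simp only [map_mul, map_inv, hτx, hτy]; group
  have hτu : τ u = v⁻¹ := by
    rw [hu, pcomm]
    simp only [map_mul, map_inv, hτx, hτy, hτz, inv_inv]
    simp [mul_assoc, zmove hu hucen, zmove hv hvcen,
      cmove hucen x, cmove hucen x⁻¹, cmove hucen y, cmove hucen y⁻¹,
      cmove hucen z, cmove hucen z⁻¹, cmove hucen v, cmove hucen v⁻¹,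
      cmove hvcen x, cmove hvcen x⁻¹, cmove hvcen y, cmove hvcen y⁻¹,
      cmove hvcen z, cmove hvcen z⁻¹]
  have hτv : τ v = u⁻¹ := by
    rw [hv, pcomm]
    simp only [map_mul, map_inv, hτx, hτy, hτz, inv_inv]
    simp [mul_assoc, zmove hu hucen, zmove hv hvcen,
      cmove hucen x, cmove hucen x⁻¹, cmove hucen y, cmove hucen y⁻¹,
      cmove hucen z, cmove hucen z⁻¹, cmove hucen v, cmove hucen v⁻¹,
      cmove hvcen x, cmove hvcen x⁻¹, cmove hvcen y, cmove hvcen y⁻¹,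
      cmove hvcen z, cmove hvcen z⁻¹]
  have hB1 : ∀ w : G, x⁻¹ * (y⁻¹ * (x * (y * w))) = z * w := fun w => by rw [hz, pcomm]; group
  have hB1p : x⁻¹ * (y⁻¹ * (x * y)) = z := by rw [hz, pcomm]; group
  have hB2 : ∀ w : G, y⁻¹ * (x⁻¹ * (y * w)) = z⁻¹ * (x⁻¹ * w) := fun w => by
    rw [hz, pcomm]; group
  have hB2p : y⁻¹ * (x⁻¹ * y) = z⁻¹ * x⁻¹ := by rw [hz, pcomm]; group
  have hB3 : ∀ w : G, y⁻¹ * (x * (y * w)) = x * (z * w) := fun w => by rw [hz, pcomm]; group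
  have hB3p : y⁻¹ * (x * y) = x * z := by rw [hz, pcomm]; group
  have hπz : π z = z⁻¹ * u := by
    rw [hz, pcomm]
    simp only [map_mul, map_inv, hπx, hπy, inv_inv]
    simp [mul_assoc, hB1, hB1p, hB2, hB2p, hB3, hB3p,
      zmove hu hucen, zmove hv hvcen,
      cmove hucen x, cmove hucen x⁻¹, cmove hucen y, cmove hucen y⁻¹,
      cmove hucen z, cmove hucen z⁻¹, cmove hucen v, cmove hucen v⁻¹,
      cmove hvcen x, cmove hvcen x⁻¹, cmove hvcen y, cmove hvcen y⁻¹,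
      cmove hvcen z, cmove hvcen z⁻¹]
  have hπu : π u = u := by
    rw [hu, pcomm]
    simp only [map_mul, map_inv, hπx, hπy, hπz, inv_inv, mul_inv_rev]
    simp [mul_assoc, hB1, hB1p, hB2, hB2p, hB3, hB3p,
      zmove hu hucen, zmove hv hvcen,
      cmove hucen x, cmove hucen x⁻¹, cmove hucen y, cmove hucen y⁻¹,
      cmove hucen z, cmove hucen z⁻¹, cmove hucen v, cmove hucen v⁻¹,
      cmove hvcen x, cmove hvcen x⁻¹, cmove hvcen y, cmove hvcen y⁻¹,
      cmove hvcen z, cmove hvcen z⁻¹]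
  have hπv : π v = v⁻¹ := by
    rw [hv, pcomm]
    simp only [map_mul, map_inv, hπx, hπy, hπz, inv_inv, mul_inv_rev]
    simp [mul_assoc, hB1, hB1p, hB2, hB2p, hB3, hB3p,
      zmove hu hucen, zmove hv hvcen,
      cmove hucen x, cmove hucen x⁻¹, cmove hucen y, cmove hucen y⁻¹,
      cmove hucen z, cmove hucen z⁻¹, cmove hucen v, cmove hucen v⁻¹,
      cmove hvcen x, cmove hvcen x⁻¹, cmove hvcen y, cmove hvcen y⁻¹,
      cmove hvcen z, cmove hvcen z⁻¹]
  have hζz : ζ z = z * v := by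
    rw [hz, pcomm]
    simp only [map_mul, map_inv, hζx, hζy, mul_inv_rev]
    simp [mul_assoc, hB1, hB1p, hB2, hB2p, hB3, hB3p,
      zmove hu hucen, zmove hv hvcen,
      cmove hucen x, cmove hucen x⁻¹, cmove hucen y, cmove hucen y⁻¹,
      cmove hucen z, cmove hucen z⁻¹, cmove hucen v, cmove hucen v⁻¹,
      cmove hvcen x, cmove hvcen x⁻¹, cmove hvcen y, cmove hvcen y⁻¹,
      cmove hvcen z, cmove hvcen z⁻¹]
  have hζu : ζ u = u * v := by
    rw [hu, pcomm]
    simp only [map_mul, map_inv, hζx, hζy, hζz, mul_inv_rev]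
    simp [mul_assoc, hB1, hB1p, hB2, hB2p, hB3, hB3p,
      zmove hu hucen, zmove hv hvcen,
      cmove hucen x, cmove hucen x⁻¹, cmove hucen y, cmove hucen y⁻¹,
      cmove hucen z, cmove hucen z⁻¹, cmove hucen v, cmove hucen v⁻¹,
      cmove hvcen x, cmove hvcen x⁻¹, cmove hvcen y, cmove hvcen y⁻¹,
      cmove hvcen z, cmove hvcen z⁻¹]
  have hζv : ζ v = v := by
    rw [hv, pcomm]
    simp only [map_mul, map_inv, hζx, hζy, hζz, mul_inv_rev]
    simp [mul_assoc, hB1, hB1p, hB2, hB2p, hB3, hB3p,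
      zmove hu hucen, zmove hv hvcen,
      cmove hucen x, cmove hucen x⁻¹, cmove hucen y, cmove hucen y⁻¹,
      cmove hucen z, cmove hucen z⁻¹, cmove hucen v, cmove hucen v⁻¹,
      cmove hvcen x, cmove hvcen x⁻¹, cmove hvcen y, cmove hvcen y⁻¹,
      cmove hvcen z, cmove hvcen z⁻¹]
  -- every element of ⟨u, v⟩ has the form u^i * v^j
  have Cu : ∀ g : G, Commute u g := fun g => hucen g
  have Cv : ∀ g : G, Commute v g := fun g => hvcen g
  have hform : ∀ g ∈ Subgroup.closure ({u, v} : Set G), ∃ i j : ℤ, g = u ^ i * v ^ j := by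
    intro g hg
    induction hg using Subgroup.closure_induction with
    | mem w hw =>
      rcases hw with h | h
      · exact ⟨1, 0, by simp [h]⟩
      · rw [Set.mem_singleton_iff] at h
        exact ⟨0, 1, by simp [h]⟩
    | one => exact ⟨0, 0, by simp⟩
    | mul a b _ _ ha hb =>
      obtain ⟨i₁, j₁, rfl⟩ := ha
      obtain ⟨i₂, j₂, rfl⟩ := hb
      refine ⟨i₁ + i₂, j₁ + j₂, ?_⟩
      rw [zpow_add, zpow_add]
      calc u ^ i₁ * v ^ j₁ * (u ^ i₂ * v ^ j₂)
          = u ^ i₁ * (v ^ j₁ * u ^ i₂) * v ^ j₂ := by group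
        _ = u ^ i₁ * (u ^ i₂ * v ^ j₁) * v ^ j₂ := by
              rw [((Cv (u ^ i₂)).zpow_left j₁).eq]
        _ = u ^ i₁ * u ^ i₂ * (v ^ j₁ * v ^ j₂) := by group
    | inv a _ ha =>
      obtain ⟨i₁, j₁, rfl⟩ := ha
      refine ⟨-i₁, -j₁, ?_⟩
      rw [mul_inv_rev, ← zpow_neg, ← zpow_neg]
      exact (((Cv (u ^ (-i₁))).zpow_left (-j₁)).eq)
  -- now the main argument
  rw [Subgroup.eq_bot_iff_forall]
  rintro g ⟨hg1, hg2⟩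
  obtain ⟨k, hk⟩ := Subgroup.mem_zpowers_iff.mp hg1
  obtain ⟨i, j, hij⟩ := hform g hg2
  have e0 : z ^ k = u ^ i * v ^ j := hk.trans hij
  -- τ gives u^i v^j = u^j v^i
  have t1 : (z ^ k)⁻¹ = (v ^ i)⁻¹ * (u ^ j)⁻¹ := by
    have := congrArg τ e0
    simpa only [map_mul, map_zpow, hτz, hτu, hτv, inv_zpow] using this
  have E1 : u ^ i * v ^ j = u ^ j * v ^ i := by
    rw [← e0, ← inv_inv (z ^ k), t1]; group
  have w1 : u ^ (j - i) = v ^ (j - i) := by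
    calc u ^ (j - i) = (u ^ i)⁻¹ * (u ^ j * v ^ i) * (v ^ i)⁻¹ := by group
      _ = (u ^ i)⁻¹ * (u ^ i * v ^ j) * (v ^ i)⁻¹ := by rw [E1]
      _ = v ^ (j - i) := by group
  have w1mem : u ^ (j - i) ∈ Subgroup.zpowers u ⊓ Subgroup.zpowers v := by
    refine ⟨Subgroup.zpow_mem_zpowers u _, ?_⟩
    rw [w1]; exact Subgroup.zpow_mem_zpowers v _
  rw [huv, Subgroup.mem_bot] at w1mem
  -- π gives u^k = u^(2i)
  have t2 : (z ^ k)⁻¹ * u ^ k = u ^ i * (v ^ j)⁻¹ := by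
    have := congrArg π e0
    rw [map_zpow, map_mul, map_zpow, map_zpow, hπz, hπu, hπv,
      ((Cu z⁻¹).symm.mul_zpow k), inv_zpow, inv_zpow] at this
    exact this
  have E2 : u ^ k = u ^ (2 * i) := by
    calc u ^ k = z ^ k * ((z ^ k)⁻¹ * u ^ k) := by group
      _ = z ^ k * (u ^ i * (v ^ j)⁻¹) := by rw [t2]
      _ = u ^ i * v ^ j * (u ^ i * (v ^ j)⁻¹) := by rw [e0]
      _ = u ^ i * (v ^ j * u ^ i) * (v ^ j)⁻¹ := by group
      _ = u ^ i * (u ^ i * v ^ j) * (v ^ j)⁻¹ := by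
            rw [((Cv (u ^ i)).zpow_left j).eq]
      _ = u ^ (2 * i) := by group
  -- ζ gives v^k = v^i
  have t3 : z ^ k * v ^ k = u ^ i * v ^ i * v ^ j := by
    have := congrArg ζ e0
    rw [map_zpow, map_mul, map_zpow, map_zpow, hζz, hζu, hζv,
      ((Cv z).symm.mul_zpow k), ((Cv u).symm.mul_zpow i)] at this
    rw [this]
  have E3 : v ^ k = v ^ i := by
    have h2 : u ^ i * (v ^ j * v ^ k) = u ^ i * (v ^ i * v ^ j) := by
      calc u ^ i * (v ^ j * v ^ k) = u ^ i * v ^ j * v ^ k := by group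
        _ = z ^ k * v ^ k := by rw [e0]
        _ = u ^ i * v ^ i * v ^ j := t3
        _ = u ^ i * (v ^ i * v ^ j) := by group
    have h3 := mul_left_cancel h2
    calc v ^ k = (v ^ j)⁻¹ * (v ^ j * v ^ k) := by group
      _ = (v ^ j)⁻¹ * (v ^ i * v ^ j) := by rw [h3]
      _ = v ^ i := by group
  -- conclude with divisibility arithmetic
  have d1 : ((p ^ c : ℕ) : ℤ) ∣ (k - 2 * i) := by
    rw [← hou]
    rw [orderOf_dvd_iff_zpow_eq_one, zpow_sub, E2]
    group
  have d2 : ((p ^ c : ℕ) : ℤ) ∣ (k - i) := by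
    rw [← hov]
    rw [orderOf_dvd_iff_zpow_eq_one, zpow_sub, E3]
    group
  have d3 : ((p ^ c : ℕ) : ℤ) ∣ (j - i) := by
    rw [← hou]
    rw [orderOf_dvd_iff_zpow_eq_one]
    exact w1mem
  have di : ((p ^ c : ℕ) : ℤ) ∣ i := by
    have h := dvd_sub d2 d1
    rwa [show k - i - (k - 2 * i) = i by ring] at h
  have dj : ((p ^ c : ℕ) : ℤ) ∣ j := by
    have h := dvd_add d3 di
    rwa [show j - i + i = j by ring] at h
  have hui : u ^ i = 1 := by
    rw [← orderOf_dvd_iff_zpow_eq_one, hou]; exact di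
  have hvj : v ^ j = 1 := by
    rw [← orderOf_dvd_iff_zpow_eq_one, hov]; exact dj
  rw [hij, hui, hvj, mul_one]
end
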